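/- For i, j ∈ 𝒫 ∪ {0}, the space of R-module homomorphisms Hom_R(Δ(j), Δ(i)) has K-dimension 1 if either (i, j ∈ 𝒫 and i ⪯ j in 𝒫) or i = j = 0, and has K-dimension 0 in all other cases. -/

import Mathlib

open Matrix

set_option synthInstance.maxHeartbeats 1000000
set_option maxHeartbeats 2000000

/-- A finite poset structure on `{1,…,n}` (modeled as `Fin n`) whose order
relation refines the natural linear order. -/
structure PosetOn (n : ℕ) where
  le : Fin n → Fin n → Prop
  le_refl : ∀ i, le i i
  le_trans : ∀ {i j k : Fin n}, le i j → le j k → le i k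
  le_compat : ∀ {i j : Fin n}, le i j → i ≤ j

/-- The incidence algebra `K𝒫` as a set of `n × n` matrices. -/
def KPset (K : Type) [Field K] {n : ℕ} (P : PosetOn n) : Set (Matrix (Fin n) (Fin n) K) :=
  {M | ∀ j i, M j i ≠ 0 → P.le i j}

/-- The matrix model of the right Burt–Butler algebra: `(n+1) × (n+1)` matrices (indexed by
`Fin n ⊕ Unit`) whose upper-left `n × n` block is in `K𝒫` and upper-right block is zero. -/
def RSet (K : Type) [Field K] {n : ℕ} (P : PosetOn n) :
    Set (Matrix (Fin n ⊕ Unit) (Fin n ⊕ Unit) K) :=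
  {X | X.toBlocks₁₁ ∈ KPset K P ∧ X.toBlocks₁₂ = 0}

section GenericModules

variable {K : Type} [Field K] {A : Type} [Ring A] [Algebra K A] (e f : A)

/-- The left ideal `A e = {y ∈ A : y e = y}` (for `e` idempotent), as an `A`-submodule. -/
def leftIdeal (A : Type) [Ring A] (e : A) : Submodule A A where
  carrier := {y | y * e = y}
  add_mem' := by intro a b ha hb; show (a + b) * e = a + b; rw [add_mul, ha, hb]
  zero_mem' := zero_mul e
  smul_mem' := by intro r y hy; show (r • y) * e = r • y; rw [smul_eq_mul, mul_assoc, hy]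

/-- The cyclic submodule of `leftIdeal A e` generated by (elements equal to) `f`. -/
def cycSub (A : Type) [Ring A] (e f : A) : Submodule A ↥(leftIdeal A e) :=
  Submodule.span A {y : ↥(leftIdeal A e) | (y : A) = f}

/-- The quotient `(A e) / (A f)`; for the right Burt–Butler algebra this realizes the
standard modules `Δ(k) = Re_k / K·E_{n+1,k}`. -/
def DeltaGen (A : Type) [Ring A] (e f : A) : Type :=
  ↥(leftIdeal A e) ⧸ cycSub A e f

noncomputable instance : AddCommGroup (DeltaGen A e f) :=
  inferInstanceAs (AddCommGroup (↥(leftIdeal A e) ⧸ cycSub A e f))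

noncomputable instance : Module A (DeltaGen A e f) :=
  inferInstanceAs (Module A (↥(leftIdeal A e) ⧸ cycSub A e f))

noncomputable instance : Module K (DeltaGen A e f) :=
  inferInstanceAs (Module K (↥(leftIdeal A e) ⧸ cycSub A e f))

noncomputable instance : SMulCommClass A K (DeltaGen A e f) :=
  inferInstanceAs (SMulCommClass A K (↥(leftIdeal A e) ⧸ cycSub A e f))

end GenericModules

section GenLemmas
variable {A : Type} [Ring A] {e f : A}

lemma gen_leftIdeal (he : e * e = e) (y : ↥(leftIdeal A e)) :
    (↑y : A) • (⟨e, he⟩ : ↥(leftIdeal A e)) = y := Subtype.ext y.2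

lemma hom_ext_leftIdeal (he : e * e = e) {N : Type} [AddCommGroup N] [Module A N]
    {φ ψ : ↥(leftIdeal A e) →ₗ[A] N} (h : φ ⟨e, he⟩ = ψ ⟨e, he⟩) : φ = ψ := by
  ext y
  rw [← gen_leftIdeal he y]
  simp only [_root_.map_smul, h]

lemma cyc_mem_iff (hf : f ∈ leftIdeal A e) {z : ↥(leftIdeal A e)} :
    z ∈ cycSub A e f ↔ ∃ r : A, r • (⟨f, hf⟩ : ↥(leftIdeal A e)) = z := by
  have hs : {y : ↥(leftIdeal A e) | (y : A) = f} = {(⟨f, hf⟩ : ↥(leftIdeal A e))} := by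
    ext y; simp [Subtype.ext_iff]
  rw [cycSub, hs, Submodule.mem_span_singleton]

def mkD (A : Type) [Ring A] (e f : A) : ↥(leftIdeal A e) →ₗ[A] DeltaGen A e f :=
  (cycSub A e f).mkQ

lemma mkD_surjective : Function.Surjective (mkD A e f) :=
  Submodule.mkQ_surjective _

lemma hom_ext_Delta (he : e * e = e) {N : Type} [AddCommGroup N] [Module A N]
    {φ ψ : DeltaGen A e f →ₗ[A] N}
    (h : φ (mkD A e f ⟨e, he⟩) = ψ (mkD A e f ⟨e, he⟩)) : φ = ψ := by
  ext x
  obtain ⟨y, rfl⟩ := mkD_surjective (A := A) (e := e) (f := f) x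
  rw [← gen_leftIdeal he y]
  simp only [_root_.map_smul, h]

end GenLemmas

section MatLemmas
variable {K : Type} [Field K] {n : ℕ}

lemma key_mul (a b : Fin n ⊕ Unit) (M : Matrix (Fin n ⊕ Unit) (Fin n ⊕ Unit) K) :
    single a a 1 * M * single b b 1 = M a b • single a b 1 := by
  ext c d
  simp [Matrix.mul_apply, Matrix.single, ite_and, Finset.sum_ite_eq, Finset.sum_ite_eq']
  aesop

lemma mul_col (M : Matrix (Fin n ⊕ Unit) (Fin n ⊕ Unit) K) (hM : M.toBlocks₁₂ = 0)
    (c : Fin n ⊕ Unit) :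
    M * single (Sum.inr ()) c 1
      = M (Sum.inr ()) (Sum.inr ()) • single (Sum.inr ()) c 1 := by
  have h0 : ∀ x : Fin n, M (Sum.inl x) (Sum.inr ()) = 0 := fun x =>
    congrFun (congrFun hM x) ()
  ext a d
  rcases a with x | u
  · simp [Matrix.mul_apply, Matrix.single, ite_and, Finset.sum_ite_eq',
      h0 x]
  · simp [Matrix.mul_apply, Matrix.single, ite_and, Finset.sum_ite_eq']

variable {P : PosetOn n} {R : Subalgebra K (Matrix (Fin n ⊕ Unit) (Fin n ⊕ Unit) K)}

lemma memR_blocks12 (hR : (R : Set (Matrix (Fin n ⊕ Unit) (Fin n ⊕ Unit) K)) = RSet K P)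
    (r : R) : (r : Matrix (Fin n ⊕ Unit) (Fin n ⊕ Unit) K).toBlocks₁₂ = 0 := by
  have : (r : Matrix (Fin n ⊕ Unit) (Fin n ⊕ Unit) K) ∈ RSet K P := by
    rw [← hR]; exact r.2
  exact this.2

lemma memR_KP (hR : (R : Set (Matrix (Fin n ⊕ Unit) (Fin n ⊕ Unit) K)) = RSet K P)
    (r : R) (a b : Fin n)
    (h : (r : Matrix (Fin n ⊕ Unit) (Fin n ⊕ Unit) K) (Sum.inl a) (Sum.inl b) ≠ 0) :
    P.le b a := by
  have hm : (r : Matrix (Fin n ⊕ Unit) (Fin n ⊕ Unit) K) ∈ RSet K P := by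
    rw [← hR]; exact r.2
  exact hm.1 a b h

end MatLemmas
section Cases
variable {K : Type} [Field K] {n : ℕ} {P : PosetOn n}
  {R : Subalgebra K (Matrix (Fin n ⊕ Unit) (Fin n ⊕ Unit) K)}

local instance instACGLI (e : R) : AddCommGroup ↥(leftIdeal R e) :=
  inferInstance

local instance instModRLI (e : R) : Module R ↥(leftIdeal R e) :=
  inferInstance

noncomputable local instance instModKLI (e : R) : Module K ↥(leftIdeal R e) :=
  inferInstance

local instance instRing : Ring R := inferInstance

noncomputable local instance instAlg : Algebra K R := inferInstance

local instance instSCCLI (e : R) : SMulCommClass R K ↥(leftIdeal R e) :=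
  inferInstance

noncomputable local instance instModKHomLL (e e' : R) :
    Module K (↥(leftIdeal R e) →ₗ[R] ↥(leftIdeal R e')) :=
  inferInstance

noncomputable local instance instModKHomLD (e e' f' : R) :
    Module K (↥(leftIdeal R e) →ₗ[R] DeltaGen R e' f') :=
  inferInstance

noncomputable local instance instModKHomDL (e f e' : R) :
    Module K (DeltaGen R e f →ₗ[R] ↥(leftIdeal R e')) :=
  inferInstance

noncomputable local instance instModKHomDD (e f e' f' : R) :
    Module K (DeltaGen R e f →ₗ[R] DeltaGen R e' f') :=
  inferInstance

lemma mkD_smulK {A : Type} [Ring A] [Algebra K A] {e f : A} (c : K) (x : ↥(leftIdeal A e)) :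
    mkD A e f (c • x) = c • mkD A e f x := by
  show Submodule.Quotient.mk (c • x) = c • Submodule.Quotient.mk x
  exact Submodule.Quotient.mk_smul _ c x

lemma caseA (hR : (R : Set (Matrix (Fin n ⊕ Unit) (Fin n ⊕ Unit) K)) = RSet K P)
    (ee EE : Fin n → R)
    (hee : ∀ k, (ee k : Matrix (Fin n ⊕ Unit) (Fin n ⊕ Unit) K)
      = Matrix.single (Sum.inl k) (Sum.inl k) 1)
    (hEE : ∀ k, (EE k : Matrix (Fin n ⊕ Unit) (Fin n ⊕ Unit) K)
      = Matrix.single (Sum.inr ()) (Sum.inl k) 1)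
    (i j : Fin n) (hij : P.le i j) :
    Module.finrank K (DeltaGen R (ee j) (EE j) →ₗ[R] DeltaGen R (ee i) (EE i)) = 1 := by
  -- idempotents and products
  have hej : ee j * ee j = ee j := by
    apply Subtype.coe_injective
    push_cast [hee]
    rw [Matrix.single_mul_single_same, one_mul]
  -- the element E = E_{ji} of R
  have hEmemR : Matrix.single (Sum.inl j) (Sum.inl i) (1:K) ∈ R := by
    have : Matrix.single (Sum.inl j) (Sum.inl i) (1:K) ∈ RSet K P := by
      constructor
      · intro a b h
        have hc : Sum.inl j = (Sum.inl a : Fin n ⊕ Unit) ∧ Sum.inl i = (Sum.inl b : Fin n ⊕ Unit) := by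
          by_contra hc
          apply h
          show Matrix.single (Sum.inl j) (Sum.inl i) (1:K) (Sum.inl a) (Sum.inl b) = 0
          simp only [Matrix.single, Matrix.of_apply]
          rw [if_neg hc]
        obtain ⟨h1, h2⟩ := hc
        cases Sum.inl_injective h1
        cases Sum.inl_injective h2
        exact hij
      · ext a b
        simp [Matrix.toBlocks₁₂, Matrix.single]
    rw [← SetLike.mem_coe, hR]; exact this
  set E : R := ⟨Matrix.single (Sum.inl j) (Sum.inl i) (1:K), hEmemR⟩ with hEdef
  have hEcoe : (E : Matrix (Fin n ⊕ Unit) (Fin n ⊕ Unit) K)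
      = Matrix.single (Sum.inl j) (Sum.inl i) 1 := rfl
  have hEi : E * ee i = E := by
    apply Subtype.coe_injective
    push_cast [hee, hEcoe]
    rw [Matrix.single_mul_single_same, one_mul]
  have hjE : ee j * E = E := by
    apply Subtype.coe_injective
    push_cast [hee, hEcoe]
    rw [Matrix.single_mul_single_same, one_mul]
  have hEEjE : EE j * E = EE i := by
    apply Subtype.coe_injective
    push_cast [hEE, hEcoe]
    rw [Matrix.single_mul_single_same, one_mul]
  have hEEmem : ∀ k, (EE k : R) ∈ leftIdeal R (ee k) := by
    intro k
    show EE k * ee k = EE k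
    apply Subtype.coe_injective
    push_cast [hee, hEE]
    rw [Matrix.single_mul_single_same, one_mul]
  have hEmem : (E : R) ∈ leftIdeal R (ee i) := hEi
  have hejmem : (ee j : R) ∈ leftIdeal R (ee j) := hej
  -- right multiplication by E
  let rmul : ↥(leftIdeal R (ee j)) →ₗ[R] ↥(leftIdeal R (ee i)) :=
    { toFun := fun y => ⟨(y : R) * E, by
        show ((y : R) * E) * ee i = (y : R) * E
        rw [mul_assoc, hEi]⟩
      map_add' := fun a b => Subtype.ext (add_mul _ _ _)
      map_smul' := fun r y => Subtype.ext (by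
        show ((r • (y : R)) * E) = r • ((y : R) * E)
        rw [smul_eq_mul, smul_eq_mul, mul_assoc]) }
  have hrmul : ∀ y : ↥(leftIdeal R (ee j)), ((rmul y : ↥(leftIdeal R (ee i))) : R) = (y : R) * E :=
    fun y => rfl
  let ψ' : ↥(leftIdeal R (ee j)) →ₗ[R] DeltaGen R (ee i) (EE i) :=
    (mkD R (ee i) (EE i)).comp rmul
  have hEEi_cyc : (⟨EE i, hEEmem i⟩ : ↥(leftIdeal R (ee i))) ∈ cycSub R (ee i) (EE i) := by
    rw [cyc_mem_iff (hEEmem i)]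
    exact ⟨1, one_smul _ _⟩
  have hker : cycSub R (ee j) (EE j) ≤ LinearMap.ker ψ' := by
    intro z hz
    obtain ⟨r, hr⟩ := (cyc_mem_iff (hEEmem j)).mp hz
    rw [LinearMap.mem_ker, ← hr, LinearMap.map_smul]
    have : ψ' ⟨EE j, hEEmem j⟩ = 0 := by
      show mkD R (ee i) (EE i) (rmul ⟨EE j, hEEmem j⟩) = 0
      have h1 : rmul ⟨EE j, hEEmem j⟩ = ⟨EE i, hEEmem i⟩ := by
        apply Subtype.ext
        rw [hrmul]
        exact hEEjE
      rw [h1]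
      exact (Submodule.Quotient.mk_eq_zero _).mpr hEEi_cyc
    rw [this, smul_zero]
  let ψ0 : DeltaGen R (ee j) (EE j) →ₗ[R] DeltaGen R (ee i) (EE i) :=
    (cycSub R (ee j) (EE j)).liftQ ψ' hker
  have hψ0g : ψ0 (mkD R (ee j) (EE j) ⟨ee j, hejmem⟩) = mkD R (ee i) (EE i) ⟨E, hEmem⟩ := by
    show ψ' ⟨ee j, hejmem⟩ = _
    show mkD R (ee i) (EE i) (rmul ⟨ee j, hejmem⟩) = _
    congr 1
    apply Subtype.ext
    rw [hrmul]
    exact hjE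
  -- the K-linear map K → Hom
  let toHom := LinearMap.toSpanSingleton K
    (DeltaGen R (ee j) (EE j) →ₗ[R] DeltaGen R (ee i) (EE i)) ψ0
  have hbij : Function.Bijective toHom := by
    constructor
    · intro c c' hcc
      -- reduce to c • ψ0 = c' • ψ0 implies c = c'
      have h0 : (c - c') • ψ0 = 0 := by
        rw [sub_smul]
        have : c • ψ0 = c' • ψ0 := hcc
        rw [this, sub_self]
      by_contra hne
      have hd : c - c' ≠ 0 := sub_ne_zero_of_ne hne
      set d := c - c'
      have h1 := LinearMap.congr_fun h0 (mkD R (ee j) (EE j) ⟨ee j, hejmem⟩)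
      rw [LinearMap.smul_apply, hψ0g, LinearMap.zero_apply] at h1
      have h2 : mkD R (ee i) (EE i) (d • ⟨E, hEmem⟩) = 0 := by
        rw [mkD_smulK]
        exact h1
      have h2' : (d • (⟨E, hEmem⟩ : ↥(leftIdeal R (ee i)))) ∈ cycSub R (ee i) (EE i) :=
        (Submodule.Quotient.mk_eq_zero _).mp h2
      obtain ⟨r, hr⟩ := (cyc_mem_iff (hEEmem i)).mp h2'
      have hmat : (r : Matrix (Fin n ⊕ Unit) (Fin n ⊕ Unit) K)
          * (EE i : Matrix (Fin n ⊕ Unit) (Fin n ⊕ Unit) K)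
          = d • (E : Matrix (Fin n ⊕ Unit) (Fin n ⊕ Unit) K) := by
        have := congrArg (fun z : ↥(leftIdeal R (ee i)) =>
          ((z : R) : Matrix (Fin n ⊕ Unit) (Fin n ⊕ Unit) K)) hr
        simpa using this
      rw [hEE i, hEcoe, mul_col _ (memR_blocks12 hR r)] at hmat
      have := congrFun (congrFun hmat (Sum.inl j)) (Sum.inl i)
      simp [Matrix.single] at this
      exact hd this.symm
    · intro φ
      set g := mkD R (ee j) (EE j) ⟨ee j, hejmem⟩ with hg
      have hejg : (ee j : R) • g = g := by
        rw [hg, ← LinearMap.map_smul]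
        congr 1
        apply Subtype.ext
        show (ee j : R) • ((ee j : R)) = (ee j : R)
        rw [smul_eq_mul, hej]
      obtain ⟨y, hy⟩ := mkD_surjective (A := R) (e := ee i) (f := EE i) (φ g)
      set c := ((y : R) : Matrix (Fin n ⊕ Unit) (Fin n ⊕ Unit) K) (Sum.inl j) (Sum.inl i) with hc
      have hkey : (ee j : R) • (y : ↥(leftIdeal R (ee i)))
          = c • (⟨E, hEmem⟩ : ↥(leftIdeal R (ee i))) := by
        apply Subtype.ext
        show (ee j : R) • ((y : R)) = c • (E : R)
        rw [smul_eq_mul]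
        apply Subtype.coe_injective
        push_cast []
        have hy2 : ((y : R) : Matrix (Fin n ⊕ Unit) (Fin n ⊕ Unit) K)
            * (ee i : Matrix (Fin n ⊕ Unit) (Fin n ⊕ Unit) K)
            = ((y : R) : Matrix (Fin n ⊕ Unit) (Fin n ⊕ Unit) K) :=
          congrArg (fun z : R => (z : Matrix (Fin n ⊕ Unit) (Fin n ⊕ Unit) K)) y.2
        calc (ee j : Matrix (Fin n ⊕ Unit) (Fin n ⊕ Unit) K) * ((y : R) : Matrix (Fin n ⊕ Unit) (Fin n ⊕ Unit) K)
            = (ee j : Matrix (Fin n ⊕ Unit) (Fin n ⊕ Unit) K) * ((y : R) : Matrix (Fin n ⊕ Unit) (Fin n ⊕ Unit) K) * (ee i : Matrix (Fin n ⊕ Unit) (Fin n ⊕ Unit) K) := by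
              rw [mul_assoc, hy2]
          _ = c • (E : Matrix (Fin n ⊕ Unit) (Fin n ⊕ Unit) K) := by
              rw [hee, hee, key_mul, hEcoe, hc]
      have hφg : φ g = c • mkD R (ee i) (EE i) ⟨E, hEmem⟩ := by
        have h3 : φ g = (ee j : R) • φ g := by rw [← LinearMap.map_smul, hejg]
        rw [h3, ← hy, ← LinearMap.map_smul, hkey, mkD_smulK]
      refine ⟨c, ?_⟩
      show c • ψ0 = φ
      apply hom_ext_Delta hej
      rw [LinearMap.smul_apply, hψ0g, ← hφg]
  rw [← LinearEquiv.finrank_eq (LinearEquiv.ofBijective toHom hbij), Module.finrank_self]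

lemma caseB (hR : (R : Set (Matrix (Fin n ⊕ Unit) (Fin n ⊕ Unit) K)) = RSet K P)
    (ee EE : Fin n → R)
    (hee : ∀ k, (ee k : Matrix (Fin n ⊕ Unit) (Fin n ⊕ Unit) K)
      = Matrix.single (Sum.inl k) (Sum.inl k) 1)
    (i j : Fin n) (hij : ¬ P.le i j) :
    Module.finrank K (DeltaGen R (ee j) (EE j) →ₗ[R] DeltaGen R (ee i) (EE i)) = 0 := by
  have hej : ee j * ee j = ee j := by
    apply Subtype.coe_injective
    push_cast [hee]
    rw [Matrix.single_mul_single_same, one_mul]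
  have hejmem : (ee j : R) ∈ leftIdeal R (ee j) := hej
  have hkill : ∀ x : DeltaGen R (ee i) (EE i), (ee j : R) • x = 0 := by
    intro x
    obtain ⟨y, rfl⟩ := mkD_surjective (A := R) (e := ee i) (f := EE i) x
    rw [← LinearMap.map_smul]
    have hy0 : (ee j : R) • (y : ↥(leftIdeal R (ee i))) = 0 := by
      apply Subtype.ext
      show (ee j : R) • ((y : R)) = 0
      rw [smul_eq_mul]
      apply Subtype.coe_injective
      push_cast []
      have hy2 : ((y : R) : Matrix (Fin n ⊕ Unit) (Fin n ⊕ Unit) K)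
          * (ee i : Matrix (Fin n ⊕ Unit) (Fin n ⊕ Unit) K)
          = ((y : R) : Matrix (Fin n ⊕ Unit) (Fin n ⊕ Unit) K) :=
        congrArg (fun z : R => (z : Matrix (Fin n ⊕ Unit) (Fin n ⊕ Unit) K)) y.2
      have hc0 : ((y : R) : Matrix (Fin n ⊕ Unit) (Fin n ⊕ Unit) K) (Sum.inl j) (Sum.inl i) = 0 := by
        by_contra hc
        exact hij (memR_KP hR (y : R) j i hc)
      calc (ee j : Matrix (Fin n ⊕ Unit) (Fin n ⊕ Unit) K) * ((y : R) : Matrix (Fin n ⊕ Unit) (Fin n ⊕ Unit) K)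
          = (ee j : Matrix (Fin n ⊕ Unit) (Fin n ⊕ Unit) K) * ((y : R) : Matrix (Fin n ⊕ Unit) (Fin n ⊕ Unit) K) * (ee i : Matrix (Fin n ⊕ Unit) (Fin n ⊕ Unit) K) := by
            rw [mul_assoc, hy2]
        _ = 0 := by rw [hee, hee, key_mul, hc0, zero_smul]
    rw [hy0, map_zero]
  have hzero : ∀ φ : DeltaGen R (ee j) (EE j) →ₗ[R] DeltaGen R (ee i) (EE i), φ = 0 := by
    intro φ
    apply hom_ext_Delta hej
    have hejg : (ee j : R) • (mkD R (ee j) (EE j) ⟨ee j, hejmem⟩) = mkD R (ee j) (EE j) ⟨ee j, hejmem⟩ := by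
      rw [← LinearMap.map_smul]
      congr 1
      apply Subtype.ext
      show (ee j : R) • ((ee j : R)) = (ee j : R)
      rw [smul_eq_mul, hej]
    rw [← hejg, LinearMap.map_smul, hkill, LinearMap.zero_apply]
  have : Subsingleton (DeltaGen R (ee j) (EE j) →ₗ[R] DeltaGen R (ee i) (EE i)) :=
    ⟨fun a b => by rw [hzero a, hzero b]⟩
  exact Module.finrank_zero_of_subsingleton

lemma caseC (e0 : R) (he0 : (e0 : Matrix (Fin n ⊕ Unit) (Fin n ⊕ Unit) K)
      = Matrix.single (Sum.inr ()) (Sum.inr ()) 1) :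
    Module.finrank K (↥(leftIdeal R e0) →ₗ[R] ↥(leftIdeal R e0)) = 1 := by
  have he0sq : e0 * e0 = e0 := by
    apply Subtype.coe_injective
    push_cast [he0]
    rw [Matrix.single_mul_single_same, one_mul]
  have he0mem : e0 ∈ leftIdeal R e0 := he0sq
  let ψ0 : ↥(leftIdeal R e0) →ₗ[R] ↥(leftIdeal R e0) := LinearMap.id
  let toHom := LinearMap.toSpanSingleton K (↥(leftIdeal R e0) →ₗ[R] ↥(leftIdeal R e0)) ψ0
  have hbij : Function.Bijective toHom := by
    constructor
    · intro c c' hcc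
      have h1 : c • (⟨e0, he0mem⟩ : ↥(leftIdeal R e0)) = c' • ⟨e0, he0mem⟩ :=
        LinearMap.congr_fun hcc ⟨e0, he0mem⟩
      have h2 : c • (e0 : Matrix (Fin n ⊕ Unit) (Fin n ⊕ Unit) K)
          = c' • (e0 : Matrix (Fin n ⊕ Unit) (Fin n ⊕ Unit) K) := by
        have := congrArg (fun z : ↥(leftIdeal R e0) =>
          ((z : R) : Matrix (Fin n ⊕ Unit) (Fin n ⊕ Unit) K)) h1
        simpa using this
      rw [he0] at h2
      have h4 := congrFun (congrFun h2 (Sum.inr ())) (Sum.inr ())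
      simpa [Matrix.single] using h4
    · intro φ
      set x := φ ⟨e0, he0mem⟩ with hx
      have h1 : e0 • x = x := by
        rw [hx, ← LinearMap.map_smul]
        congr 1
        apply Subtype.ext
        show e0 • e0 = e0
        rw [smul_eq_mul, he0sq]
      set c := ((x : R) : Matrix (Fin n ⊕ Unit) (Fin n ⊕ Unit) K) (Sum.inr ()) (Sum.inr ()) with hc
      have hkey : x = c • (⟨e0, he0mem⟩ : ↥(leftIdeal R e0)) := by
        apply Subtype.ext
        show (x : R) = c • e0
        apply Subtype.coe_injective
        push_cast []
        have hl : (e0 : Matrix (Fin n ⊕ Unit) (Fin n ⊕ Unit) K)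
            * ((x : R) : Matrix (Fin n ⊕ Unit) (Fin n ⊕ Unit) K)
            = ((x : R) : Matrix (Fin n ⊕ Unit) (Fin n ⊕ Unit) K) := by
          have := congrArg (fun z : ↥(leftIdeal R e0) => ((z : R) : Matrix (Fin n ⊕ Unit) (Fin n ⊕ Unit) K)) h1
          simpa using this
        have hr : ((x : R) : Matrix (Fin n ⊕ Unit) (Fin n ⊕ Unit) K)
            * (e0 : Matrix (Fin n ⊕ Unit) (Fin n ⊕ Unit) K)
            = ((x : R) : Matrix (Fin n ⊕ Unit) (Fin n ⊕ Unit) K) :=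
          congrArg (fun z : R => (z : Matrix (Fin n ⊕ Unit) (Fin n ⊕ Unit) K)) x.2
        calc ((x : R) : Matrix (Fin n ⊕ Unit) (Fin n ⊕ Unit) K)
            = (e0 : Matrix (Fin n ⊕ Unit) (Fin n ⊕ Unit) K) * ((x : R) : Matrix (Fin n ⊕ Unit) (Fin n ⊕ Unit) K) * (e0 : Matrix (Fin n ⊕ Unit) (Fin n ⊕ Unit) K) := by
              rw [hl, hr]
          _ = c • (e0 : Matrix (Fin n ⊕ Unit) (Fin n ⊕ Unit) K) := by
              rw [he0, key_mul, hc]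
      refine ⟨c, ?_⟩
      show c • ψ0 = φ
      apply hom_ext_leftIdeal he0sq
      rw [LinearMap.smul_apply]
      show c • (⟨e0, he0mem⟩ : ↥(leftIdeal R e0)) = φ ⟨e0, he0mem⟩
      rw [← hkey, hx]
  rw [← LinearEquiv.finrank_eq (LinearEquiv.ofBijective toHom hbij), Module.finrank_self]

lemma caseD1 (hR : (R : Set (Matrix (Fin n ⊕ Unit) (Fin n ⊕ Unit) K)) = RSet K P)
    (e0 : R) (he0 : (e0 : Matrix (Fin n ⊕ Unit) (Fin n ⊕ Unit) K)
      = Matrix.single (Sum.inr ()) (Sum.inr ()) 1)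
    (ee EE : Fin n → R)
    (hee : ∀ k, (ee k : Matrix (Fin n ⊕ Unit) (Fin n ⊕ Unit) K)
      = Matrix.single (Sum.inl k) (Sum.inl k) 1)
    (hEE : ∀ k, (EE k : Matrix (Fin n ⊕ Unit) (Fin n ⊕ Unit) K)
      = Matrix.single (Sum.inr ()) (Sum.inl k) 1)
    (k : Fin n) :
    Module.finrank K (↥(leftIdeal R e0) →ₗ[R] DeltaGen R (ee k) (EE k)) = 0 := by
  have he0sq : e0 * e0 = e0 := by
    apply Subtype.coe_injective
    push_cast [he0]
    rw [Matrix.single_mul_single_same, one_mul]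
  have he0mem : e0 ∈ leftIdeal R e0 := he0sq
  have hEEmem : (EE k : R) ∈ leftIdeal R (ee k) := by
    show EE k * ee k = EE k
    apply Subtype.coe_injective
    push_cast [hee, hEE]
    rw [Matrix.single_mul_single_same, one_mul]
  have hEEzero : mkD R (ee k) (EE k) ⟨EE k, hEEmem⟩ = 0 := by
    apply (Submodule.Quotient.mk_eq_zero _).mpr
    rw [cyc_mem_iff hEEmem]
    exact ⟨1, one_smul _ _⟩
  have hkill : ∀ x : DeltaGen R (ee k) (EE k), e0 • x = 0 := by
    intro x
    obtain ⟨y, rfl⟩ := mkD_surjective (A := R) (e := ee k) (f := EE k) x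
    rw [← LinearMap.map_smul]
    set c := ((y : R) : Matrix (Fin n ⊕ Unit) (Fin n ⊕ Unit) K) (Sum.inr ()) (Sum.inl k) with hc
    have hy0 : e0 • (y : ↥(leftIdeal R (ee k))) = c • (⟨EE k, hEEmem⟩ : ↥(leftIdeal R (ee k))) := by
      apply Subtype.ext
      show e0 • ((y : R)) = c • (EE k : R)
      rw [smul_eq_mul]
      apply Subtype.coe_injective
      push_cast []
      have hy2 : ((y : R) : Matrix (Fin n ⊕ Unit) (Fin n ⊕ Unit) K)
          * (ee k : Matrix (Fin n ⊕ Unit) (Fin n ⊕ Unit) K)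
          = ((y : R) : Matrix (Fin n ⊕ Unit) (Fin n ⊕ Unit) K) :=
        congrArg (fun z : R => (z : Matrix (Fin n ⊕ Unit) (Fin n ⊕ Unit) K)) y.2
      calc (e0 : Matrix (Fin n ⊕ Unit) (Fin n ⊕ Unit) K) * ((y : R) : Matrix (Fin n ⊕ Unit) (Fin n ⊕ Unit) K)
          = (e0 : Matrix (Fin n ⊕ Unit) (Fin n ⊕ Unit) K) * ((y : R) : Matrix (Fin n ⊕ Unit) (Fin n ⊕ Unit) K) * (ee k : Matrix (Fin n ⊕ Unit) (Fin n ⊕ Unit) K) := by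
            rw [mul_assoc, hy2]
        _ = c • (EE k : Matrix (Fin n ⊕ Unit) (Fin n ⊕ Unit) K) := by
            rw [he0, hee, key_mul, hEE, hc]
    rw [hy0, mkD_smulK, hEEzero, smul_zero]
  have hzero : ∀ φ : ↥(leftIdeal R e0) →ₗ[R] DeltaGen R (ee k) (EE k), φ = 0 := by
    intro φ
    apply hom_ext_leftIdeal he0sq
    have he0g : e0 • (⟨e0, he0mem⟩ : ↥(leftIdeal R e0)) = ⟨e0, he0mem⟩ := by
      apply Subtype.ext
      show e0 • e0 = e0
      rw [smul_eq_mul, he0sq]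
    rw [← he0g, LinearMap.map_smul, hkill, LinearMap.zero_apply]
  have : Subsingleton (↥(leftIdeal R e0) →ₗ[R] DeltaGen R (ee k) (EE k)) :=
    ⟨fun a b => by rw [hzero a, hzero b]⟩
  exact Module.finrank_zero_of_subsingleton

lemma caseD2 (hR : (R : Set (Matrix (Fin n ⊕ Unit) (Fin n ⊕ Unit) K)) = RSet K P)
    (e0 : R) (he0 : (e0 : Matrix (Fin n ⊕ Unit) (Fin n ⊕ Unit) K)
      = Matrix.single (Sum.inr ()) (Sum.inr ()) 1)
    (ee EE : Fin n → R)
    (hee : ∀ k, (ee k : Matrix (Fin n ⊕ Unit) (Fin n ⊕ Unit) K)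
      = Matrix.single (Sum.inl k) (Sum.inl k) 1)
    (k : Fin n) :
    Module.finrank K (DeltaGen R (ee k) (EE k) →ₗ[R] ↥(leftIdeal R e0)) = 0 := by
  have hek : ee k * ee k = ee k := by
    apply Subtype.coe_injective
    push_cast [hee]
    rw [Matrix.single_mul_single_same, one_mul]
  have hekmem : (ee k : R) ∈ leftIdeal R (ee k) := hek
  have hkill : ∀ x : ↥(leftIdeal R e0), (ee k : R) • x = 0 := by
    intro x
    apply Subtype.ext
    show (ee k : R) • ((x : R)) = 0
    rw [smul_eq_mul]
    apply Subtype.coe_injective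
    push_cast []
    have hx2 : ((x : R) : Matrix (Fin n ⊕ Unit) (Fin n ⊕ Unit) K)
        * (e0 : Matrix (Fin n ⊕ Unit) (Fin n ⊕ Unit) K)
        = ((x : R) : Matrix (Fin n ⊕ Unit) (Fin n ⊕ Unit) K) :=
      congrArg (fun z : R => (z : Matrix (Fin n ⊕ Unit) (Fin n ⊕ Unit) K)) x.2
    have hc0 : ((x : R) : Matrix (Fin n ⊕ Unit) (Fin n ⊕ Unit) K) (Sum.inl k) (Sum.inr ()) = 0 :=
      congrFun (congrFun (memR_blocks12 hR (x : R)) k) ()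
    calc (ee k : Matrix (Fin n ⊕ Unit) (Fin n ⊕ Unit) K) * ((x : R) : Matrix (Fin n ⊕ Unit) (Fin n ⊕ Unit) K)
        = (ee k : Matrix (Fin n ⊕ Unit) (Fin n ⊕ Unit) K) * ((x : R) : Matrix (Fin n ⊕ Unit) (Fin n ⊕ Unit) K) * (e0 : Matrix (Fin n ⊕ Unit) (Fin n ⊕ Unit) K) := by
          rw [mul_assoc, hx2]
      _ = 0 := by rw [hee, he0, key_mul, hc0, zero_smul]
  have hzero : ∀ φ : DeltaGen R (ee k) (EE k) →ₗ[R] ↥(leftIdeal R e0), φ = 0 := by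
    intro φ
    apply hom_ext_Delta hek
    have hekg : (ee k : R) • (mkD R (ee k) (EE k) ⟨ee k, hekmem⟩) = mkD R (ee k) (EE k) ⟨ee k, hekmem⟩ := by
      rw [← LinearMap.map_smul]
      congr 1
      apply Subtype.ext
      show (ee k : R) • ((ee k : R)) = (ee k : R)
      rw [smul_eq_mul, hek]
    rw [← hekg, LinearMap.map_smul, hkill, LinearMap.zero_apply]
  have : Subsingleton (DeltaGen R (ee k) (EE k) →ₗ[R] ↥(leftIdeal R e0)) :=
    ⟨fun a b => by rw [hzero a, hzero b]⟩
  exact Module.finrank_zero_of_subsingleton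

end Cases


/-- Dimensions of homomorphism spaces between standard modules of the right Burt–Butler
algebra `R`: `Hom_R(Δ(j), Δ(i))` is one-dimensional when `i ⪯ j` in `𝒫` or `i = j = 0`,
and zero otherwise. Here `Δ(k) = Re_k/K·E_{n+1,k}` for `k ∈ 𝒫` and `Δ(0) = Re₀`. -/
theorem stmt17 {K : Type} [Field K] [IsAlgClosed K] {n : ℕ} (hn : 1 ≤ n) (P : PosetOn n)
    (R : Subalgebra K (Matrix (Fin n ⊕ Unit) (Fin n ⊕ Unit) K))
    (hR : (R : Set (Matrix (Fin n ⊕ Unit) (Fin n ⊕ Unit) K)) = RSet K P)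
    (e0 : R) (he0 : (e0 : Matrix (Fin n ⊕ Unit) (Fin n ⊕ Unit) K)
      = Matrix.single (Sum.inr ()) (Sum.inr ()) 1)
    (ee : Fin n → R) (hee : ∀ k, (ee k : Matrix (Fin n ⊕ Unit) (Fin n ⊕ Unit) K)
      = Matrix.single (Sum.inl k) (Sum.inl k) 1)
    (EE : Fin n → R) (hEE : ∀ k, (EE k : Matrix (Fin n ⊕ Unit) (Fin n ⊕ Unit) K)
      = Matrix.single (Sum.inr ()) (Sum.inl k) 1) :
    (∀ i j : Fin n, P.le i j →
      Module.finrank K (DeltaGen R (ee j) (EE j) →ₗ[R] DeltaGen R (ee i) (EE i)) = 1) ∧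
    (∀ i j : Fin n, ¬ P.le i j →
      Module.finrank K (DeltaGen R (ee j) (EE j) →ₗ[R] DeltaGen R (ee i) (EE i)) = 0) ∧
    Module.finrank K (↥(leftIdeal R e0) →ₗ[R] ↥(leftIdeal R e0)) = 1 ∧
    (∀ k : Fin n,
      Module.finrank K (↥(leftIdeal R e0) →ₗ[R] DeltaGen R (ee k) (EE k)) = 0 ∧
      Module.finrank K (DeltaGen R (ee k) (EE k) →ₗ[R] ↥(leftIdeal R e0)) = 0) := by
  exact ⟨fun i j hij => caseA hR ee EE hee hEE i j hij,
    fun i j hij => caseB hR ee EE hee i j hij,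
    caseC e0 he0,
    fun k => ⟨caseD1 hR e0 he0 ee EE hee hEE k, caseD2 hR e0 he0 ee EE hee k⟩⟩
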